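/- Let r > 0 and let φ : [0,∞) → ℝ be the real-valued solution of −φ''(x) + q(x)φ(x) = −r²φ(x) with φ(0) = 0, φ'(0) = 1 (i.e., φ = φ(·,ir)), and suppose φ'(1) = r·φ(1) (equivalently, the Jost function vanishes at −ir). Suppose c > 0 satisfies c·( φ(1)² − 2r·∫₀¹ φ(t)² dt ) = 2r, and set A(x) = 1 + c·∫₀ˣ φ(t)² dt. Then A(x) ≥ 1 for all x ≥ 0, A'(x) = 2r·A(x) for all x ≥ 1, and consequently the Jost–Kohn correction q_o := −(log A)'' vanishes identically on (1,∞), so that the transformed potential q* = q + q_o agrees with q (hence vanishes) on (1,∞). -/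

import Mathlib

open MeasureTheory Set

noncomputable section

/-- `y` is a real solution of `-y'' + q y = E y` on `[0,∞)`: `y` is continuously
differentiable with derivative `y'`, `y'` is absolutely continuous (an indefinite
integral of a locally integrable `y''`), and the equation holds for a.e. `x ≥ 0`. -/
def RealSchrodingerSol (q : ℝ → ℝ) (E : ℝ) (y y' : ℝ → ℝ) : Prop :=
  (∀ x : ℝ, 0 ≤ x → HasDerivAt y (y' x) x) ∧
  ∃ y'' : ℝ → ℝ,
    (∀ X : ℝ, IntegrableOn y'' (Icc 0 X)) ∧
    (∀ x : ℝ, 0 ≤ x → y' x = y' 0 + ∫ t in (0:ℝ)..x, y'' t) ∧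
    (∀ᵐ x : ℝ, 0 ≤ x → -y'' x + q x * y x = E * y x)

/-- If `φ = φ(·,ir)` is real with `φ'(1) = r φ(1)` and `c > 0` satisfies
`c(φ(1)² - 2r ∫₀¹ φ²) = 2r`, then `A(x) = 1 + c ∫₀ˣ φ²` satisfies `A ≥ 1`,
`A' = 2rA` on `[1,∞)`, and the Jost–Kohn correction `q₀ = -(log A)''` vanishes on
`(1,∞)`, so the transformed potential `q + q₀` agrees with `q` there. -/
theorem statement13
    (q : ℝ → ℝ) (hqint : Integrable q)
    (hqsupp : ∀ x : ℝ, x ∉ Icc (0:ℝ) 1 → q x = 0)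
    (r : ℝ) (hr : 0 < r)
    (φ φ' : ℝ → ℝ)
    (hφ : RealSchrodingerSol q (-(r ^ 2)) φ φ')
    (hφ0 : φ 0 = 0) (hφ'0 : φ' 0 = 1)
    (hbc : φ' 1 = r * φ 1)
    (c : ℝ) (hc : 0 < c)
    (hceq : c * ((φ 1) ^ 2 - 2 * r * ∫ t in (0:ℝ)..1, (φ t) ^ 2) = 2 * r)
    (A : ℝ → ℝ) (hA : ∀ x : ℝ, A x = 1 + c * ∫ t in (0:ℝ)..x, (φ t) ^ 2) :
    (∀ x : ℝ, 0 ≤ x → 1 ≤ A x) ∧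
    (∀ x : ℝ, 1 ≤ x → HasDerivAt A (2 * r * A x) x) ∧
    (∀ x : ℝ, 1 < x → deriv (deriv (fun y => Real.log (A y))) x = 0) ∧
    (∀ x : ℝ, 1 < x →
      q x + -(deriv (deriv (fun y => Real.log (A y))) x) = q x) := by
  obtain ⟨hφd, φ'', hφ''int, hφ'eq, hae⟩ := hφ
  -- continuity of φ on [0,∞)
  have hφcont : ContinuousOn φ (Ici 0) := fun x hx =>
    ((hφd x hx).continuousAt).continuousWithinAt
  have hsqcont : ContinuousOn (fun t => φ t ^ 2) (Ici 0) := hφcont.pow 2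
  have huIcc : ∀ a b : ℝ, 0 ≤ a → 0 ≤ b → uIcc a b ⊆ Ici 0 := by
    intro a b ha hb t ht
    exact le_trans (le_min ha hb) ht.1
  have hsqii : ∀ a b : ℝ, 0 ≤ a → 0 ≤ b →
      IntervalIntegrable (fun t => φ t ^ 2) volume a b := fun a b ha hb =>
    (hsqcont.mono (huIcc a b ha hb)).intervalIntegrable
  have hφii : ∀ a b : ℝ, 0 ≤ a → 0 ≤ b → IntervalIntegrable φ volume a b := fun a b ha hb =>
    (hφcont.mono (huIcc a b ha hb)).intervalIntegrable
  have hφ''ii : ∀ a b : ℝ, 0 ≤ a → 0 ≤ b → IntervalIntegrable φ'' volume a b := by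
    intro a b ha hb
    rw [intervalIntegrable_iff]
    refine (hφ''int (max a b)).mono_set ?_
    intro t ht
    exact ⟨le_trans (le_min ha hb) ht.1.le, ht.2⟩
  -- Part 1 : A ≥ 1
  have part1 : ∀ x : ℝ, 0 ≤ x → 1 ≤ A x := by
    intro x hx
    rw [hA x]
    have h1 : 0 ≤ ∫ t in (0:ℝ)..x, φ t ^ 2 :=
      intervalIntegral.integral_nonneg hx fun u _ => sq_nonneg _
    nlinarith
  -- formula for φ' on [1,∞)
  have hφ'formula : ∀ x : ℝ, 1 ≤ x → φ' x = φ' 1 + ∫ t in (1:ℝ)..x, r ^ 2 * φ t := by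
    intro x hx
    have h0x := hφ'eq x (by linarith)
    have h01 := hφ'eq 1 zero_le_one
    have hadd : (∫ t in (0:ℝ)..1, φ'' t) + ∫ t in (1:ℝ)..x, φ'' t
        = ∫ t in (0:ℝ)..x, φ'' t :=
      intervalIntegral.integral_add_adjacent_intervals (hφ''ii 0 1 le_rfl zero_le_one)
        (hφ''ii 1 x zero_le_one (by linarith))
    have hcongr : (∫ t in (1:ℝ)..x, φ'' t) = ∫ t in (1:ℝ)..x, r ^ 2 * φ t := by
      apply intervalIntegral.integral_congr_ae
      filter_upwards [hae] with t ht htmem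
      rw [uIoc_of_le hx] at htmem
      have ht1 : (1:ℝ) < t := htmem.1
      have hq : q t = 0 := hqsupp t (by simp [Set.mem_Icc]; intro; linarith)
      have heq := ht (by linarith)
      rw [hq] at heq
      nlinarith [heq]
    rw [h0x, h01, ← hadd, hcongr]
    ring
  -- continuity of φ' on [1,∞)
  have hr2φii : ∀ a b : ℝ, 0 ≤ a → 0 ≤ b →
      IntervalIntegrable (fun t => r ^ 2 * φ t) volume a b := fun a b ha hb =>
    (hφii a b ha hb).const_mul _
  have hφ'cont : ContinuousOn φ' (Ici 1) := by
    intro x hx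
    have hx1 : (1:ℝ) ≤ x := hx
    have hb : x ≤ x + 1 := by linarith
    have hcontP : ContinuousOn (fun y => φ' 1 + ∫ t in (1:ℝ)..y, r ^ 2 * φ t)
        (Icc 1 (x + 1)) := by
      apply ContinuousOn.add continuousOn_const
      have := intervalIntegral.continuousOn_primitive_interval
        (f := fun t => r ^ 2 * φ t) (a := (1:ℝ)) (b := x + 1) (μ := volume) ?_
      · rwa [uIcc_of_le (by linarith : (1:ℝ) ≤ x + 1)] at this
      · rw [uIcc_of_le (by linarith : (1:ℝ) ≤ x + 1)]
        have h := (hr2φii 1 (x+1) zero_le_one (by linarith))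
        rw [intervalIntegrable_iff_integrableOn_Icc_of_le (by linarith : (1:ℝ) ≤ x+1)] at h
        exact h
    have hagree : ContinuousOn φ' (Icc 1 (x + 1)) := by
      apply hcontP.congr
      intro y hy
      exact hφ'formula y hy.1
    have hx' : x ∈ Icc (1:ℝ) (x + 1) := ⟨hx, hb⟩
    have := hagree x hx'
    apply this.mono_of_mem_nhdsWithin
    have : Icc (1:ℝ) (x + 1) = Ici 1 ∩ Iic (x + 1) := (Ici_inter_Iic).symm
    rw [this]
    exact inter_mem_nhdsWithin _ (Iic_mem_nhds (by linarith))
  -- full derivative of φ' on (1,∞)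
  have hψd : ∀ x : ℝ, 1 < x → HasDerivAt φ' (r ^ 2 * φ x) x := by
    intro x hx
    have hmeas : StronglyMeasurableAtFilter (fun t => r ^ 2 * φ t) (nhds x) volume := by
      refine ContinuousOn.stronglyMeasurableAtFilter isOpen_Ioi ?_ x (show x ∈ Ioi (0:ℝ) from Set.mem_Ioi.mpr (by linarith))
      exact ((hφcont.mono Ioi_subset_Ici_self).const_smul (r ^ 2) : )
    have h1 : HasDerivAt (fun y => φ' 1 + ∫ t in (1:ℝ)..y, r ^ 2 * φ t) (r ^ 2 * φ x) x := by
      apply HasDerivAt.const_add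
      exact intervalIntegral.integral_hasDerivAt_right
        (hr2φii 1 x zero_le_one (by linarith)) hmeas
        (((hφd x (by linarith)).continuousAt).const_smul (r ^ 2) : )
    apply h1.congr_of_eventuallyEq
    filter_upwards [Ioi_mem_nhds hx] with y hy
    exact hφ'formula y hy.le
  -- u = φ' - rφ vanishes on [1,∞)
  set u : ℝ → ℝ := fun t => φ' t - r * φ t with hu_def
  have hucont : ContinuousOn u (Ici 1) :=
    hφ'cont.sub ((hφcont.mono (Ici_subset_Ici.2 zero_le_one)).const_smul r)
  have hu1 : u 1 = 0 := by simp [hu_def, hbc]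
  have hud : ∀ x : ℝ, 1 < x → HasDerivAt u (-(r * u x)) x := by
    intro x hx
    have h := (hψd x hx).sub ((hφd x (by linarith)).const_mul r)
    have heq : r ^ 2 * φ x - r * φ' x = -(r * u x) := by simp [hu_def]; ring
    rwa [heq] at h
  set W : ℝ → ℝ := fun t => Real.exp (r * t) * u t with hW_def
  have hWd : ∀ x : ℝ, 1 < x → HasDerivAt W 0 x := by
    intro x hx
    have hexp : HasDerivAt (fun t : ℝ => Real.exp (r * t)) (Real.exp (r * x) * r) x := by
      simpa using ((hasDerivAt_id x).const_mul r).exp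
    have h := hexp.mul (hud x hx)
    have : Real.exp (r * x) * r * u x + Real.exp (r * x) * -(r * u x) = 0 := by ring
    rwa [this] at h
  have hWcont : ContinuousOn W (Ici 1) :=
    ((Real.continuous_exp.comp (continuous_const.mul continuous_id)).continuousOn).mul hucont
  have hu0 : ∀ x : ℝ, 1 ≤ x → u x = 0 := by
    intro x hx
    rcases eq_or_lt_of_le hx with h | h
    · rw [← h]; exact hu1
    · -- W constant on (1, x]
      have hconst : ∀ a ∈ Ioc (1:ℝ) x, W a = W x := by
        intro a ha
        have hcont : ContinuousOn W (Icc a x) :=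
          hWcont.mono (Icc_subset_Ici_self.trans (Ici_subset_Ici.2 ha.1.le))
        have hderiv : ∀ y ∈ Ico a x, HasDerivWithinAt W 0 (Ici y) y := fun y hy =>
          (hWd y (lt_of_lt_of_le ha.1 hy.1)).hasDerivWithinAt
        exact (constant_of_has_deriv_right_zero hcont hderiv x (right_mem_Icc.2 ha.2)).symm
      have hlim1 : Filter.Tendsto W (nhdsWithin 1 (Ioi 1)) (nhds (W 1)) :=
        (hWcont 1 Set.self_mem_Ici).tendsto.mono_left (nhdsWithin_mono 1 Ioi_subset_Ici_self)
      have hlim2 : Filter.Tendsto W (nhdsWithin 1 (Ioi 1)) (nhds (W x)) := by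
        apply Filter.Tendsto.congr' _ tendsto_const_nhds
        filter_upwards [Ioc_mem_nhdsGT_of_mem ⟨le_rfl, h⟩] with a ha
        exact (hconst a ha).symm
      have hWx : W x = W 1 := tendsto_nhds_unique hlim2 hlim1
      have : W x = 0 := by rw [hWx, hW_def]; simp [hu1]
      have hne : Real.exp (r * x) ≠ 0 := Real.exp_ne_zero _
      simpa [hW_def, hne] using this
  have hφ'r : ∀ x : ℝ, 1 ≤ x → φ' x = r * φ x := by
    intro x hx
    have := hu0 x hx
    simp [hu_def] at this
    linarith
  -- exponential formula for φ on [1,∞)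
  have hφexp : ∀ x : ℝ, 1 ≤ x → φ x = φ 1 * Real.exp (r * (x - 1)) := by
    intro x hx
    set V : ℝ → ℝ := fun t => Real.exp (-(r * t)) * φ t with hV_def
    have hVd : ∀ y : ℝ, 1 ≤ y → HasDerivAt V 0 y := by
      intro y hy
      have hexp : HasDerivAt (fun t : ℝ => Real.exp (-(r * t)))
          (Real.exp (-(r * y)) * -r) y := by
        have := (((hasDerivAt_id y).const_mul r).neg).exp
        simpa using this
      have h := hexp.mul (hφd y (by linarith))
      have heq : Real.exp (-(r * y)) * -r * φ y + Real.exp (-(r * y)) * φ' y = 0 := by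
        rw [hφ'r y hy]; ring
      rwa [heq] at h
    have hcont : ContinuousOn V (Icc 1 x) :=
      ((Real.continuous_exp.comp (continuous_const.mul continuous_id).neg).continuousOn).mul
        (hφcont.mono fun t ht => le_trans zero_le_one ht.1)
    have hconst := constant_of_has_deriv_right_zero hcont
      (fun y hy => (hVd y hy.1).hasDerivWithinAt) x (right_mem_Icc.2 hx)
    -- V x = V 1
    have h2 : Real.exp (r * x) * (Real.exp (-(r * x)) * φ x)
        = Real.exp (r * x) * (Real.exp (-(r * 1)) * φ 1) := by
      rw [show Real.exp (-(r * x)) * φ x = V x from rfl,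
        show Real.exp (-(r * 1)) * φ 1 = V 1 from rfl, hconst]
    rw [← mul_assoc, ← Real.exp_add, add_neg_cancel, Real.exp_zero, one_mul] at h2
    rw [h2, ← mul_assoc, ← Real.exp_add]
    ring_nf
  -- derivative of A
  have hAd : ∀ x : ℝ, 1 ≤ x → HasDerivAt A (c * φ x ^ 2) x := by
    intro x hx
    have hmeas : StronglyMeasurableAtFilter (fun t => φ t ^ 2) (nhds x) volume :=
      ContinuousOn.stronglyMeasurableAtFilter isOpen_Ioi
        (hsqcont.mono Ioi_subset_Ici_self) x (show x ∈ Ioi (0:ℝ) from Set.mem_Ioi.mpr (by linarith))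
    have h1 : HasDerivAt (fun y => ∫ t in (0:ℝ)..y, φ t ^ 2) (φ x ^ 2) x :=
      intervalIntegral.integral_hasDerivAt_right (hsqii 0 x le_rfl (by linarith)) hmeas
        ((hφd x (by linarith)).continuousAt.pow 2)
    have hAeq : A = fun y => 1 + c * ∫ t in (0:ℝ)..y, φ t ^ 2 := funext hA
    rw [hAeq]
    exact (h1.const_mul c).const_add 1
  have hexp2 : ∀ x : ℝ, Real.exp (r * (x - 1)) ^ 2 = Real.exp (2 * r * (x - 1)) := by
    intro x
    rw [sq, ← Real.exp_add]
    ring_nf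
  -- integral of φ² on [1,x]
  have hint1x : ∀ x : ℝ, 1 ≤ x → (∫ t in (1:ℝ)..x, φ t ^ 2)
      = φ 1 ^ 2 * (Real.exp (2 * r * (x - 1)) - 1) / (2 * r) := by
    intro x hx
    have key := intervalIntegral.integral_eq_sub_of_hasDerivAt
      (f := fun t => φ 1 ^ 2 * Real.exp (2 * r * (t - 1)) / (2 * r))
      (f' := fun t => φ t ^ 2) (a := 1) (b := x) ?_ (hsqii 1 x zero_le_one (by linarith))
    · rw [key]
      simp only [sub_self, mul_zero, Real.exp_zero]
      field_simp
    · intro t ht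
      rw [uIcc_of_le hx] at ht
      have hsub : HasDerivAt (fun t : ℝ => 2 * r * (t - 1)) (2 * r) t := by
        simpa using ((hasDerivAt_id t).sub_const 1).const_mul (2 * r)
      have h := (hsub.exp.const_mul (φ 1 ^ 2)).div_const (2 * r)
      have heq : φ 1 ^ 2 * (Real.exp (2 * r * (t - 1)) * (2 * r)) / (2 * r) = φ t ^ 2 := by
        rw [hφexp t ht.1, mul_pow, hexp2 t]
        field_simp
      rwa [heq] at h
  -- Part 2 : A' = 2rA on [1,∞)
  have part2 : ∀ x : ℝ, 1 ≤ x → HasDerivAt A (2 * r * A x) x := by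
    intro x hx
    have hval : c * φ x ^ 2 = 2 * r * A x := by
      have hsplit : (∫ t in (0:ℝ)..x, φ t ^ 2)
          = (∫ t in (0:ℝ)..1, φ t ^ 2) + ∫ t in (1:ℝ)..x, φ t ^ 2 :=
        (intervalIntegral.integral_add_adjacent_intervals (hsqii 0 1 le_rfl zero_le_one)
          (hsqii 1 x zero_le_one (by linarith))).symm
      rw [hA x, hsplit, hint1x x hx, hφexp x hx]
      have he2 := hexp2 x
      field_simp
      linear_combination (norm := ring_nf) c * φ 1 ^ 2 * he2 + hceq
    rw [← hval]
    exact hAd x hx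
  -- Part 3 : (log A)'' = 0 on (1,∞)
  have hlogd : ∀ y : ℝ, 1 < y → HasDerivAt (fun z => Real.log (A z)) (2 * r) y := by
    intro y hy
    have hApos : A y ≠ 0 := by
      have := part1 y (by linarith)
      linarith
    have h := (part2 y hy.le).log hApos
    have : 2 * r * A y / A y = 2 * r := by field_simp
    rwa [this] at h
  have part3 : ∀ x : ℝ, 1 < x → deriv (deriv (fun y => Real.log (A y))) x = 0 := by
    intro x hx
    have hev : deriv (fun z => Real.log (A z)) =ᶠ[nhds x] fun _ => 2 * r := by
      filter_upwards [Ioi_mem_nhds hx] with y hy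
      exact (hlogd y hy).deriv
    rw [hev.deriv_eq]
    exact deriv_const x _
  refine ⟨part1, part2, part3, fun x hx => by rw [part3 x hx]; ring⟩
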